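/- Let A be a finite set and order A* by the embedding order ≤_e (u ≤_e v iff u is a subsequence of v). Then the set U(A*, ≤_e) of upward closed subsets of A*, partially ordered by set inclusion ⊆, has no antichain; that is, there is no sequence (X_i)_{i∈ℕ} of upward closed subsets of A* such that X_i ⊆ X_j implies i = j. -/

import Mathlib

namespace Stmt5

open List

attribute [local instance] Classical.propDecidable

variable {A : Type*}

inductive Atom (A : Type*) where
  | star : Set A → Atom A
  | opt : A → Atom A

def LA : Atom A → Set (List A)
  | .star B => {w | ∀ a ∈ w, a ∈ B}
  | .opt a => {[], [a]}

def LP : List (Atom A) → Set (List A)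
  | [] => {[]}
  | e :: P => {w | ∃ x ∈ LA e, ∃ y ∈ LP P, w = x ++ y}

def LU (S : List (List (Atom A))) : Set (List A) := {w | ∃ p ∈ S, w ∈ LP p}

lemma nil_mem_LA (e : Atom A) : ([] : List A) ∈ LA e := by
  cases e <;> simp [LA]

lemma nil_mem_LP (P : List (Atom A)) : ([] : List A) ∈ LP P := by
  induction P with
  | nil => simp [LP]
  | cons e P ih => exact ⟨[], nil_mem_LA e, [], ih, rfl⟩

lemma LP_mono_cons (e : Atom A) (P : List (Atom A)) : LP P ⊆ LP (e :: P) :=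
  fun w hw => ⟨[], nil_mem_LA e, w, hw, rfl⟩

lemma mem_LA_star {B : Set A} {x : List A} : x ∈ LA (.star B) ↔ ∀ c ∈ x, c ∈ B := Iff.rfl

lemma mem_LA_opt {a : A} {x : List A} : x ∈ LA (.opt a) ↔ x = [] ∨ x = [a] := Iff.rfl

lemma mem_LP_cons {e : Atom A} {P : List (Atom A)} {w : List A} :
    w ∈ LP (e :: P) ↔ ∃ x ∈ LA e, ∃ y ∈ LP P, w = x ++ y := Iff.rfl

lemma mem_LP_opt_cons {a : A} {P : List (Atom A)} {w : List A} :
    w ∈ LP (.opt a :: P) ↔ w ∈ LP P ∨ ∃ y ∈ LP P, w = a :: y := by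
  constructor
  · rintro ⟨x, hx, y, hy, rfl⟩
    rcases hx with rfl | rfl
    · exact Or.inl hy
    · exact Or.inr ⟨y, hy, rfl⟩
  · rintro (h | ⟨y, hy, rfl⟩)
    · exact ⟨[], Or.inl rfl, w, h, rfl⟩
    · exact ⟨[a], Or.inr rfl, y, hy, rfl⟩


lemma LP_mono {P Q : List (Atom A)}
    (h : List.SublistForall₂ (fun e f : Atom A => LA e ⊆ LA f) P Q) : LP P ⊆ LP Q := by
  induction h with
  | nil =>
    intro w hw
    rcases hw with rfl
    exact nil_mem_LP _
  | cons hr _ ih =>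
    rintro w ⟨x, hx, y, hy, rfl⟩
    exact ⟨x, hr hx, y, ih hy, rfl⟩
  | cons_right _ ih =>
    intro w hw
    exact LP_mono_cons _ _ (ih hw)

lemma LU_mono {S T : List (List (Atom A))}
    (h : List.SublistForall₂ (fun p q : List (Atom A) => LP p ⊆ LP q) S T) : LU S ⊆ LU T := by
  induction h with
  | nil => rintro w ⟨p, hp, _⟩; simp at hp
  | @cons p q S' T' hr _ ih =>
    rintro w ⟨p', hp', hw⟩
    rcases List.mem_cons.1 hp' with rfl | hp'
    · exact ⟨q, List.mem_cons_self, hr hw⟩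
    · obtain ⟨q', hq', h'⟩ := ih ⟨p', hp', hw⟩
      exact ⟨q', List.mem_cons_of_mem _ hq', h'⟩
  | @cons_right b S' T' _ ih =>
    intro w hw
    obtain ⟨q', hq', h'⟩ := ih hw
    exact ⟨q', List.mem_cons_of_mem _ hq', h'⟩

lemma LU_append (S T : List (List (Atom A))) : LU (S ++ T) = LU S ∪ LU T := by
  ext w
  simp [LU, or_and_right, exists_or]

lemma LU_map_cons (e : Atom A) (S : List (List (Atom A))) :
    LU (S.map (fun p => e :: p)) = {w | ∃ x ∈ LA e, ∃ y ∈ LU S, w = x ++ y} := by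
  ext w
  constructor
  · rintro ⟨p, hp, hw⟩
    obtain ⟨q, hq, rfl⟩ := List.mem_map.1 hp
    obtain ⟨x, hx, y, hy, rfl⟩ := hw
    exact ⟨x, hx, y, ⟨q, hq, hy⟩, rfl⟩
  · rintro ⟨x, hx, y, ⟨q, hq, hy⟩, rfl⟩
    exact ⟨e :: q, List.mem_map_of_mem hq, x, hx, y, hy, rfl⟩

noncomputable def inter : List (Atom A) → List (Atom A) → List (List (Atom A))
  | [], _ => [[]]
  | _ :: _, [] => [[]]
  | .opt a :: P, .opt b :: Q =>
      if a = b then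
        (inter P Q).map (fun p => .opt a :: p) ++ inter P (.opt b :: Q) ++ inter (.opt a :: P) Q
      else inter P (.opt b :: Q) ++ inter (.opt a :: P) Q
  | .opt a :: P, .star C :: Q =>
      if a ∈ C then (inter P (.star C :: Q)).map (fun p => .opt a :: p) ++ inter (.opt a :: P) Q
      else inter P (.star C :: Q) ++ inter (.opt a :: P) Q
  | .star B :: P, .opt b :: Q =>
      if b ∈ B then (inter (.star B :: P) Q).map (fun p => .opt b :: p) ++ inter P (.opt b :: Q)
      else inter (.star B :: P) Q ++ inter P (.opt b :: Q)
  | .star B :: P, .star C :: Q =>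
      (inter P (.star C :: Q) ++ inter (.star B :: P) Q).map (fun p => .star (B ∩ C) :: p)
  termination_by P Q => P.length + Q.length

theorem inter_correct : ∀ P Q : List (Atom A), LU (inter P Q) = LP P ∩ LP Q
  | [], Q => by
    ext w
    constructor
    · rintro ⟨p, hp, hw⟩
      simp only [inter, List.mem_singleton] at hp
      subst hp
      rcases hw with rfl
      exact ⟨rfl, nil_mem_LP Q⟩
    · rintro ⟨h1, _⟩
      exact ⟨[], by simp [inter], h1⟩
  | e :: P, [] => by
    ext w
    constructor
    · rintro ⟨p, hp, hw⟩
      simp only [inter, List.mem_singleton] at hp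
      subst hp
      rcases hw with rfl
      exact ⟨nil_mem_LP _, rfl⟩
    · rintro ⟨_, h2⟩
      exact ⟨[], by simp [inter], h2⟩
  | .opt a :: P, .opt b :: Q => by
    have h1 := inter_correct P Q
    have h2 := inter_correct P (.opt b :: Q)
    have h3 := inter_correct (.opt a :: P) Q
    by_cases hab : a = b
    · subst hab
      have e1 : inter (Atom.opt a :: P) (Atom.opt a :: Q) =
          (inter P Q).map (fun p => Atom.opt a :: p) ++ inter P (.opt a :: Q)
            ++ inter (.opt a :: P) Q := by
        simp [inter]
      rw [e1, LU_append, LU_append, LU_map_cons, h1, h2, h3]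
      ext w
      constructor
      · rintro ((⟨x, hx, y, ⟨hyP, hyQ⟩, rfl⟩ | ⟨hP, hQ⟩) | ⟨hP, hQ⟩)
        · rcases hx with rfl | rfl
          · exact ⟨LP_mono_cons _ _ hyP, LP_mono_cons _ _ hyQ⟩
          · exact ⟨⟨[a], Or.inr rfl, y, hyP, rfl⟩, ⟨[a], Or.inr rfl, y, hyQ, rfl⟩⟩
        · exact ⟨LP_mono_cons _ _ hP, hQ⟩
        · exact ⟨hP, LP_mono_cons _ _ hQ⟩
      · rintro ⟨hP, hQ⟩
        rcases mem_LP_opt_cons.1 hP with hP' | ⟨p, hp, rfl⟩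
        · exact Or.inl (Or.inr ⟨hP', hQ⟩)
        · rcases mem_LP_opt_cons.1 hQ with hQ' | ⟨q, hq, heq⟩
          · exact Or.inr ⟨hP, hQ'⟩
          · obtain ⟨rfl⟩ : p = q := by simpa using heq
            exact Or.inl (Or.inl ⟨[a], Or.inr rfl, p, ⟨hp, hq⟩, rfl⟩)
    · have e1 : inter (Atom.opt a :: P) (Atom.opt b :: Q) =
          inter P (.opt b :: Q) ++ inter (.opt a :: P) Q := by
        simp [inter, hab]
      rw [e1, LU_append, h2, h3]
      ext w
      constructor
      · rintro (⟨hP, hQ⟩ | ⟨hP, hQ⟩)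
        · exact ⟨LP_mono_cons _ _ hP, hQ⟩
        · exact ⟨hP, LP_mono_cons _ _ hQ⟩
      · rintro ⟨hP, hQ⟩
        rcases mem_LP_opt_cons.1 hP with hP' | ⟨p, hp, rfl⟩
        · exact Or.inl ⟨hP', hQ⟩
        · rcases mem_LP_opt_cons.1 hQ with hQ' | ⟨q, hq, heq⟩
          · exact Or.inr ⟨hP, hQ'⟩
          · simp only [List.cons.injEq] at heq
            exact absurd heq.1 hab
  | .opt a :: P, .star C :: Q => by
    have h2 := inter_correct P (.star C :: Q)
    have h3 := inter_correct (.opt a :: P) Q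
    by_cases haC : a ∈ C
    · have e1 : inter (Atom.opt a :: P) (Atom.star C :: Q) =
          (inter P (.star C :: Q)).map (fun p => Atom.opt a :: p) ++ inter (.opt a :: P) Q := by
        simp [inter, haC]
      rw [e1, LU_append, LU_map_cons, h2, h3]
      ext w
      constructor
      · rintro (⟨x, hx, y, ⟨hyP, hyQ⟩, rfl⟩ | ⟨hP, hQ⟩)
        · rcases hx with rfl | rfl
          · exact ⟨LP_mono_cons _ _ hyP, hyQ⟩
          · refine ⟨⟨[a], Or.inr rfl, y, hyP, rfl⟩, ?_⟩
            obtain ⟨v, hv, q, hq, rfl⟩ := hyQ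
            refine ⟨a :: v, ?_, q, hq, rfl⟩
            intro c hc
            rcases List.mem_cons.1 hc with rfl | hc
            · exact haC
            · exact hv c hc
        · exact ⟨hP, LP_mono_cons _ _ hQ⟩
      · rintro ⟨hP, hQ⟩
        obtain ⟨v, hv, q, hq, hw⟩ := hQ
        rcases mem_LP_opt_cons.1 hP with hP' | ⟨p, hp, heq⟩
        · exact Or.inl ⟨[], Or.inl rfl, w, ⟨hP', ⟨v, hv, q, hq, hw⟩⟩, rfl⟩
        · cases v with
          | nil =>
            refine Or.inr ⟨hP, ?_⟩
            simp only [List.nil_append] at hw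
            exact hw ▸ hq
          | cons c v' =>
            rw [heq, List.cons_append, List.cons.injEq] at hw
            obtain ⟨rfl, hpvq⟩ := hw
            refine Or.inl ⟨[a], Or.inr rfl, p, ⟨hp, ⟨v', fun c hc => hv c (List.mem_cons_of_mem _ hc),
              q, hq, hpvq⟩⟩, heq⟩
    · have e1 : inter (Atom.opt a :: P) (Atom.star C :: Q) =
          inter P (.star C :: Q) ++ inter (.opt a :: P) Q := by
        simp [inter, haC]
      rw [e1, LU_append, h2, h3]
      ext w
      constructor
      · rintro (⟨hP, hQ⟩ | ⟨hP, hQ⟩)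
        · exact ⟨LP_mono_cons _ _ hP, hQ⟩
        · exact ⟨hP, LP_mono_cons _ _ hQ⟩
      · rintro ⟨hP, hQ⟩
        obtain ⟨v, hv, q, hq, hw⟩ := hQ
        rcases mem_LP_opt_cons.1 hP with hP' | ⟨p, hp, heq⟩
        · exact Or.inl ⟨hP', ⟨v, hv, q, hq, hw⟩⟩
        · cases v with
          | nil =>
            refine Or.inr ⟨hP, ?_⟩
            simp only [List.nil_append] at hw
            exact hw ▸ hq
          | cons c v' =>
            rw [heq, List.cons_append, List.cons.injEq] at hw
            exact absurd (hw.1 ▸ hv c (List.mem_cons_self)) (by simpa [hw.1] using haC)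
  | .star B :: P, .opt b :: Q => by
    have h2 := inter_correct (.star B :: P) Q
    have h3 := inter_correct P (.opt b :: Q)
    by_cases hbB : b ∈ B
    · have e1 : inter (Atom.star B :: P) (Atom.opt b :: Q) =
          (inter (.star B :: P) Q).map (fun p => Atom.opt b :: p) ++ inter P (.opt b :: Q) := by
        simp [inter, hbB]
      rw [e1, LU_append, LU_map_cons, h2, h3]
      ext w
      constructor
      · rintro (⟨x, hx, y, ⟨hyP, hyQ⟩, rfl⟩ | ⟨hP, hQ⟩)
        · rcases hx with rfl | rfl
          · exact ⟨hyP, LP_mono_cons _ _ hyQ⟩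
          · refine ⟨?_, ⟨[b], Or.inr rfl, y, hyQ, rfl⟩⟩
            obtain ⟨v, hv, q, hq, rfl⟩ := hyP
            refine ⟨b :: v, ?_, q, hq, rfl⟩
            intro c hc
            rcases List.mem_cons.1 hc with rfl | hc
            · exact hbB
            · exact hv c hc
        · exact ⟨LP_mono_cons _ _ hP, hQ⟩
      · rintro ⟨hP, hQ⟩
        obtain ⟨v, hv, q, hq, hw⟩ := hP
        rcases mem_LP_opt_cons.1 hQ with hQ' | ⟨p, hp, heq⟩
        · exact Or.inl ⟨[], Or.inl rfl, w, ⟨⟨v, hv, q, hq, hw⟩, hQ'⟩, rfl⟩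
        · cases v with
          | nil =>
            refine Or.inr ⟨?_, hQ⟩
            simp only [List.nil_append] at hw
            exact hw ▸ hq
          | cons c v' =>
            rw [heq, List.cons_append, List.cons.injEq] at hw
            obtain ⟨rfl, hpvq⟩ := hw
            refine Or.inl ⟨[b], Or.inr rfl, p, ⟨⟨v', fun c hc => hv c (List.mem_cons_of_mem _ hc),
              q, hq, hpvq⟩, hp⟩, heq⟩
    · have e1 : inter (Atom.star B :: P) (Atom.opt b :: Q) =
          inter (.star B :: P) Q ++ inter P (.opt b :: Q) := by
        simp [inter, hbB]
      rw [e1, LU_append, h2, h3]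
      ext w
      constructor
      · rintro (⟨hP, hQ⟩ | ⟨hP, hQ⟩)
        · exact ⟨hP, LP_mono_cons _ _ hQ⟩
        · exact ⟨LP_mono_cons _ _ hP, hQ⟩
      · rintro ⟨hP, hQ⟩
        obtain ⟨v, hv, q, hq, hw⟩ := hP
        rcases mem_LP_opt_cons.1 hQ with hQ' | ⟨p, hp, heq⟩
        · exact Or.inl ⟨⟨v, hv, q, hq, hw⟩, hQ'⟩
        · cases v with
          | nil =>
            refine Or.inr ⟨?_, hQ⟩
            simp only [List.nil_append] at hw
            exact hw ▸ hq
          | cons c v' =>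
            rw [heq, List.cons_append, List.cons.injEq] at hw
            exact absurd (hw.1 ▸ hv c (List.mem_cons_self)) (by simpa [hw.1] using hbB)
  | .star B :: P, .star C :: Q => by
    have h2 := inter_correct P (.star C :: Q)
    have h3 := inter_correct (.star B :: P) Q
    have e1 : inter (Atom.star B :: P) (Atom.star C :: Q) =
        (inter P (.star C :: Q) ++ inter (.star B :: P) Q).map
          (fun p => Atom.star (B ∩ C) :: p) := by
      simp [inter]
    rw [e1, LU_map_cons, LU_append, h2, h3]
    ext w
    constructor
    · rintro ⟨x, hx, y, hy, rfl⟩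
      have hx' : ∀ c ∈ x, c ∈ B ∩ C := hx
      rcases hy with ⟨hyP, ⟨v, hv, q, hq, hy'⟩⟩ | ⟨⟨v, hv, p, hp, hy'⟩, hyQ⟩
      · constructor
        · exact ⟨x, fun c hc => (hx' c hc).1, y, hyP, rfl⟩
        · refine ⟨x ++ v, ?_, q, hq, by rw [hy', List.append_assoc]⟩
          intro c hc
          rcases List.mem_append.1 hc with hc | hc
          · exact (hx' c hc).2
          · exact hv c hc
      · constructor
        · refine ⟨x ++ v, ?_, p, hp, by rw [hy', List.append_assoc]⟩
          intro c hc
          rcases List.mem_append.1 hc with hc | hc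
          · exact (hx' c hc).1
          · exact hv c hc
        · exact ⟨x, fun c hc => (hx' c hc).2, y, hyQ, rfl⟩
    · rintro ⟨⟨u, hu, p, hp, hw1⟩, ⟨v, hv, q, hq, hw2⟩⟩
      have heq : u ++ p = v ++ q := by rw [← hw1, ← hw2]
      rcases List.append_eq_append_iff.1 heq with ⟨t, htv, htp⟩ | ⟨t, htu, htq⟩
      · refine ⟨u, ?_, p, Or.inl ⟨hp, ⟨t, ?_, q, hq, htp⟩⟩, hw1⟩
        · intro c hc
          exact ⟨hu c hc, hv c (htv ▸ List.mem_append_left _ hc)⟩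
        · intro c hc
          exact hv c (htv ▸ List.mem_append_right _ hc)
      · refine ⟨v, ?_, q, Or.inr ⟨⟨t, ?_, p, hp, htq⟩, hq⟩, hw2⟩
        · intro c hc
          exact ⟨hu c (htu ▸ List.mem_append_left _ hc), hv c hc⟩
        · intro c hc
          exact hu c (htu ▸ List.mem_append_right _ hc)
  termination_by P Q => P.length + Q.length


/-! ### Avoidance languages -/

lemma cons_sublist_of_append {a : A} {r x z : List A} (hax : a ∉ x)
    (h : (a :: r).Sublist (x ++ z)) : (a :: r).Sublist z := by
  induction x with
  | nil => simpa using h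
  | cons c x ih =>
    rw [List.cons_append] at h
    cases h with
    | cons _ h' => exact ih (fun hm => hax (List.mem_cons_of_mem _ hm)) h'
    | cons_cons _ h' => exact absurd (List.mem_cons_self) hax

lemma exists_split_first {a : A} {v : List A} (h : a ∈ v) :
    ∃ x y, v = x ++ a :: y ∧ a ∉ x := by
  induction v with
  | nil => simp at h
  | cons c v ih =>
    by_cases hca : c = a
    · exact ⟨[], v, by simp [hca], by simp⟩
    · have h' : a ∈ v := by
        rcases List.mem_cons.1 h with h' | h'
        · exact absurd h'.symm hca
        · exact h'
      obtain ⟨x, y, h1, h2⟩ := ih h'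
      refine ⟨c :: x, y, by rw [List.cons_append, h1], ?_⟩
      intro hm
      rcases List.mem_cons.1 hm with h'' | h''
      · exact hca h''.symm
      · exact h2 h''

noncomputable def avoid : List A → List (List (Atom A))
  | [] => []
  | a :: r => [Atom.star {x | x ≠ a}] ::
      (avoid r).map (fun p => Atom.star {x | x ≠ a} :: Atom.opt a :: p)

theorem avoid_correct (w : List A) : LU (avoid w) = {v | ¬ w.Sublist v} := by
  induction w with
  | nil =>
    ext v
    simp [avoid, LU, List.nil_sublist]
  | cons a r ih =>
    ext v
    constructor
    · rintro ⟨p, hp, hv⟩ hsub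
      rcases List.mem_cons.1 hp with rfl | hp
      · obtain ⟨x, hx, y, hy, rfl⟩ := hv
        rcases hy with rfl
        have hmem : a ∈ x ++ ([] : List A) := hsub.subset (List.mem_cons_self)
        have hxa : ∀ c ∈ x, c ≠ a := hx
        simp only [List.append_nil] at hmem
        exact hxa a hmem rfl
      · obtain ⟨q, hq, rfl⟩ := List.mem_map.1 hp
        obtain ⟨x, hx, z, hz, rfl⟩ := hv
        have hax : a ∉ x := fun hm => (hx a hm) rfl
        have hsub' : (a :: r).Sublist z := cons_sublist_of_append hax hsub
        rcases mem_LP_opt_cons.1 hz with hz' | ⟨y, hy, rfl⟩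
        · have hrz : r.Sublist z := (List.sublist_cons_self a r).trans hsub'
          have hzr : z ∈ LU (avoid r) := ⟨q, hq, hz'⟩
          rw [ih] at hzr
          exact hzr hrz
        · have hry : r.Sublist y := List.cons_sublist_cons.1 hsub'
          have hyr : y ∈ LU (avoid r) := ⟨q, hq, hy⟩
          rw [ih] at hyr
          exact hyr hry
    · intro hv
      by_cases ha : a ∈ v
      · obtain ⟨x, y, rfl, hax⟩ := exists_split_first ha
        have hry : ¬ r.Sublist y := fun hr =>
          hv ((List.cons_sublist_cons.2 hr).trans (List.sublist_append_right x _))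
        have hy : y ∈ LU (avoid r) := by rw [ih]; exact hry
        obtain ⟨q, hq, hyq⟩ := hy
        exact ⟨Atom.star {x | x ≠ a} :: Atom.opt a :: q,
          List.mem_cons_of_mem _ (List.mem_map_of_mem hq),
          x, fun c hc hca => hax (hca ▸ hc), a :: y, ⟨[a], Or.inr rfl, y, hyq, rfl⟩, rfl⟩
      · exact ⟨[Atom.star {x | x ≠ a}], List.mem_cons_self,
          v, fun c hc hca => ha (hca ▸ hc), [], rfl, (List.append_nil v).symm⟩

/-! ### Complement of an upward closure -/

noncomputable def compl : List (List A) → List (List (Atom A))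
  | [] => [[Atom.star Set.univ]]
  | w :: F => (avoid w).flatMap (fun p => (compl F).flatMap (fun q => inter p q))

theorem compl_correct (F : List (List A)) :
    LU (compl F) = {v | ∀ w ∈ F, ¬ w.Sublist v} := by
  induction F with
  | nil =>
    ext v
    constructor
    · intro _
      simp
    · intro _
      exact ⟨[Atom.star Set.univ], List.mem_cons_self,
        v, fun c _ => Set.mem_univ c, [], rfl, (List.append_nil v).symm⟩
  | cons w F ih =>
    ext v
    constructor
    · rintro ⟨p', hp', hv⟩
      obtain ⟨p, hp, hmem⟩ := List.mem_flatMap.1 hp'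
      obtain ⟨q, hq, hp'q⟩ := List.mem_flatMap.1 hmem
      have hvin : v ∈ LU (inter p q) := ⟨p', hp'q, hv⟩
      rw [inter_correct] at hvin
      intro u hu
      rcases List.mem_cons.1 hu with rfl | hu
      · have : v ∈ LU (avoid u) := ⟨p, hp, hvin.1⟩
        rw [avoid_correct] at this
        exact this
      · have : v ∈ LU (compl F) := ⟨q, hq, hvin.2⟩
        rw [ih] at this
        exact this u hu
    · intro hv
      have h1 : v ∈ LU (avoid w) := by
        rw [avoid_correct]; exact hv w (List.mem_cons_self)
      have h2 : v ∈ LU (compl F) := by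
        rw [ih]; exact fun u hu => hv u (List.mem_cons_of_mem _ hu)
      obtain ⟨p, hp, hvp⟩ := h1
      obtain ⟨q, hq, hvq⟩ := h2
      have hvin : v ∈ LU (inter p q) := by rw [inter_correct]; exact ⟨hvp, hvq⟩
      obtain ⟨p', hp', hv'⟩ := hvin
      exact ⟨p', List.mem_flatMap.2 ⟨p, hp, List.mem_flatMap.2 ⟨q, hq, hp'⟩⟩, hv'⟩

/-! ### Well-quasi-ordering facts -/

lemma pwo_univ_of_finite {α : Type*} [Finite α] (r : α → α → Prop) [IsRefl α r] :
    (Set.univ : Set α).PartiallyWellOrderedOn r := by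
  intro f
  obtain ⟨i, j, hne, heq⟩ := Finite.exists_ne_map_eq_of_infinite f
  rcases hne.lt_or_gt with h | h
  · exact ⟨i, j, h, by rw [heq]; exact refl_of r _⟩
  · exact ⟨j, i, h, by rw [heq]; exact refl_of r _⟩

instance [Finite A] : Finite (Atom A) :=
  Finite.of_equiv (Set A ⊕ A)
    { toFun := fun x => match x with | Sum.inl B => Atom.star B | Sum.inr a => Atom.opt a
      invFun := fun x => match x with | Atom.star B => Sum.inl B | Atom.opt a => Sum.inr a
      left_inv := fun x => by cases x <;> rfl
      right_inv := fun x => by cases x <;> rfl }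

lemma pwo_LP [Finite A] :
    (Set.univ : Set (List (Atom A))).PartiallyWellOrderedOn
      (fun p q => LP p ⊆ LP q) := by
  haveI : IsRefl (Atom A) (fun e f => LA e ⊆ LA f) := ⟨fun _ => subset_rfl⟩
  haveI : IsTrans (Atom A) (fun e f => LA e ⊆ LA f) := ⟨fun _ _ _ h1 h2 => h1.trans h2⟩
  have h0 := pwo_univ_of_finite (fun e f : Atom A => LA e ⊆ LA f)
  have h1 := Set.PartiallyWellOrderedOn.partiallyWellOrderedOn_sublistForall₂ _ h0
  intro f
  obtain ⟨m, n, hmn, hr⟩ := h1 (fun i => ⟨(f i).1, fun x _ => Set.mem_univ x⟩)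
  exact ⟨m, n, hmn, LP_mono hr⟩

lemma pwo_LU [Finite A] (f : ℕ → List (List (Atom A))) :
    ∃ m n, m < n ∧ LU (f m) ⊆ LU (f n) := by
  haveI : IsRefl (List (Atom A)) (fun p q => LP p ⊆ LP q) := ⟨fun _ => subset_rfl⟩
  haveI : IsTrans (List (Atom A)) (fun p q => LP p ⊆ LP q) := ⟨fun _ _ _ h1 h2 => h1.trans h2⟩
  have h1 := Set.PartiallyWellOrderedOn.partiallyWellOrderedOn_sublistForall₂ _ (pwo_LP (A := A))
  obtain ⟨m, n, hmn, hr⟩ := h1 (fun i => ⟨f i, fun x _ => Set.mem_univ x⟩)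
  exact ⟨m, n, hmn, LU_mono hr⟩

/-! ### Finite basis for upward closed sets -/

lemma exists_basis [Finite A] (X : Set (List A))
    (hX : ∀ u ∈ X, ∀ v : List A, u.Sublist v → v ∈ X) :
    ∃ F : List (List A), ∀ v, v ∈ X ↔ ∃ w ∈ F, w.Sublist v := by
  classical
  set M : Set (List A) := {u | u ∈ X ∧ ∀ v ∈ X, v.Sublist u → v = u} with hM
  have hmin : ∀ n (u : List A), u.length = n → u ∈ X → ∃ m ∈ M, m.Sublist u := by
    intro n
    induction n using Nat.strong_induction_on with
    | _ n ih =>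
      intro u hlen hu
      by_cases hmem : ∀ v ∈ X, v.Sublist u → v = u
      · exact ⟨u, ⟨hu, hmem⟩, List.Sublist.refl u⟩
      · push_neg at hmem
        obtain ⟨v, hvX, hvu, hne⟩ := hmem
        have hlt : v.length < n :=
          hlen ▸ lt_of_le_of_ne hvu.length_le (fun h => hne (hvu.eq_of_length h))
        obtain ⟨m, hm, hmv⟩ := ih _ hlt v rfl hvX
        exact ⟨m, hm, hmv.trans hvu⟩
  have hfin : M.Finite := by
    by_contra hinf
    have e := Set.Infinite.natEmbedding M hinf
    haveI : IsRefl A (· = ·) := ⟨fun _ => rfl⟩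
    haveI : IsTrans A (· = ·) := ⟨fun _ _ _ h1 h2 => h1.trans h2⟩
    have h0 := pwo_univ_of_finite (α := A) (· = ·)
    have h1 := Set.PartiallyWellOrderedOn.partiallyWellOrderedOn_sublistForall₂ _ h0
    obtain ⟨m, n, hmn, hr⟩ := h1 (fun i => ⟨(e i : List A), fun x _ => Set.mem_univ x⟩)
    have hsub : (e m : List A).Sublist (e n) := by
      obtain ⟨l, hl, hsl⟩ := List.sublistForall₂_iff.1 hr
      rw [List.forall₂_eq_eq_eq] at hl
      exact hl ▸ hsl
    have heq : (e m : List A) = e n := (e n).2.2 (e m) (e m).2.1 hsub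
    exact absurd (e.injective (Subtype.ext heq)) (Nat.ne_of_lt hmn)
  refine ⟨hfin.toFinset.toList, fun v => ?_⟩
  constructor
  · intro hv
    obtain ⟨m, hm, hmv⟩ := hmin v.length v rfl hv
    exact ⟨m, by rw [Finset.mem_toList, hfin.mem_toFinset]; exact hm, hmv⟩
  · rintro ⟨w, hw, hwv⟩
    rw [Finset.mem_toList, hfin.mem_toFinset] at hw
    exact hX w hw.1 v hwv

end Stmt5

/-- Theorem 2(2), second part: the upward closed subsets of `(A*, ≤ₑ)` (embedding order,
i.e. the sublist order), ordered by inclusion, have no antichain. -/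
theorem stmt_5 (A : Type*) [Fintype A] :
    ¬ ∃ X : ℕ → Set (List A),
      (∀ i : ℕ, ∀ u ∈ X i, ∀ v : List A, u.Sublist v → v ∈ X i) ∧
      (∀ i j : ℕ, X i ⊆ X j → i = j) := by
  classical
  rintro ⟨X, hup, hanti⟩
  choose F hF using fun i => Stmt5.exists_basis (X i) (hup i)
  obtain ⟨m, n, hmn, hsub⟩ := Stmt5.pwo_LU (fun i => Stmt5.compl (F i))
  rw [Stmt5.compl_correct, Stmt5.compl_correct] at hsub
  have hXnm : X n ⊆ X m := by
    intro v hv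
    by_contra hvm
    have hv1 : ∀ w ∈ F m, ¬ w.Sublist v := by
      intro w hw hwv
      exact hvm ((hF m v).2 ⟨w, hw, hwv⟩)
    have hv2 := hsub hv1
    obtain ⟨w, hw, hwv⟩ := (hF n v).1 hv
    exact hv2 w hw hwv
  exact absurd (hanti n m hXnm) (Nat.ne_of_gt hmn)
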